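/- Let X be a real Hilbert space and ω an increasing modulus of continuity with lim_{t→∞}ω(t)=∞. Define ψ_ω(x) = φ_ω(|x|) where φ_ω(t) = ∫₀ᵗ ω(s) ds. Then for all z, h ∈ X and λ ∈ [0,1]: λψ_ω(z+(1−λ)h) + (1−λ)ψ_ω(z−λh) − ψ_ω(z) ≤ 2·λ(1−λ)·φ_ω(|h|). -/

import Mathlib

open Set MeasureTheory Filter

private lemma slope_lemma {ω : ℝ → ℝ} (hconc : ConcaveOn ℝ (Ici (0:ℝ)) ω) (h0 : ω 0 = 0)
    {a b : ℝ} (ha : 0 ≤ a) (hab : a ≤ b) : a * ω b ≤ b * ω a := by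
  rcases ha.eq_or_lt with rfl | ha'
  · simp [h0]
  have hb : 0 < b := lt_of_lt_of_le ha' hab
  have key := hconc.2 (self_mem_Ici (a := (0:ℝ))) (mem_Ici.mpr hb.le)
    (sub_nonneg.2 ((div_le_one hb).mpr hab)) (div_nonneg ha hb.le) (by ring)
  simp only [smul_eq_mul, mul_zero, h0, zero_add, add_zero, div_mul_cancel₀ _ hb.ne'] at key
  rw [div_mul_eq_mul_div, div_le_iff₀ hb] at key
  nlinarith [key]

private lemma core_ineq {ω : ℝ → ℝ} (hnonneg : ∀ t ∈ Ici (0:ℝ), 0 ≤ ω t)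
    (hmono : MonotoneOn ω (Ici (0:ℝ)))
    (hsl : ∀ a b : ℝ, 0 ≤ a → a ≤ b → a * ω b ≤ b * ω a)
    {p q e T : ℝ} (hp : 0 < p) (hq : 0 < q) (hT : 0 < T) (hqp : q ≤ p)
    (he1 : e ≤ p * q)
    (hA' : p ^ 2 - e ≤ p * T) (hB1 : q ^ 2 - e ≤ q * T) (hB2 : e - q ^ 2 ≤ q * T)
    (hT2 : T ^ 2 = p ^ 2 + q ^ 2 - 2 * e) :
    ω p * ((p ^ 2 - e) / p) + ω q * ((q ^ 2 - e) / q) ≤ 2 * (T * ω T) := by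
  have hωp : 0 ≤ ω p := hnonneg p hp.le
  have hωq : 0 ≤ ω q := hnonneg q hq.le
  have hωT : 0 ≤ ω T := hnonneg T hT.le
  set A : ℝ := (p ^ 2 - e) / p with hA
  set B : ℝ := (q ^ 2 - e) / q with hB
  have hpA : p * A = p ^ 2 - e := by rw [hA]; field_simp
  have hqB : q * B = q ^ 2 - e := by rw [hB]; field_simp
  have hA0 : 0 ≤ A := div_nonneg (by nlinarith) hp.le
  have hAT : A ≤ T := by rw [hA, div_le_iff₀ hp]; linarith
  have hBT : B ≤ T := by rw [hB, div_le_iff₀ hq]; linarith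
  have hBT' : -T ≤ B := by rw [hB, le_div_iff₀ hq]; linarith
  have hsum : p * A + q * B = T ^ 2 := by rw [hpA, hqB]; linarith
  rcases le_or_gt B 0 with hBneg | hBpos
  · -- B ≤ 0 case
    have hTp : T ≤ p := by
      nlinarith [mul_le_mul_of_nonneg_left hAT hp.le,
        mul_nonpos_of_nonneg_of_nonpos hq.le hBneg]
    have slope1 : T * ω p ≤ p * ω T := hsl T p hT.le hTp
    have slope2 : q * ω p ≤ p * ω q := hsl q p hq.le hqp
    have h1 : p * (ω p * A + ω q * B) ≤ p * (2 * (T * ω T)) := by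
      nlinarith [mul_nonneg (sub_nonneg.2 slope2) (neg_nonneg.2 hBneg),
        mul_le_mul_of_nonneg_right slope1 hT.le, mul_nonneg (mul_nonneg hp.le hT.le) hωT]
    exact le_of_mul_le_mul_left h1 hp
  · rcases le_total p T with hpT | hTp
    · -- p ≤ T
      have m1 : ω p ≤ ω T := hmono (mem_Ici.mpr hp.le) (mem_Ici.mpr hT.le) hpT
      have m2 : ω q ≤ ω T := hmono (mem_Ici.mpr hq.le) (mem_Ici.mpr hT.le) (hqp.trans hpT)
      have e1 : ω p * A ≤ ω T * T :=
        (mul_le_mul_of_nonneg_right m1 hA0).trans (mul_le_mul_of_nonneg_left hAT hωT)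
      have e2 : ω q * B ≤ ω T * T :=
        (mul_le_mul_of_nonneg_right m2 hBpos.le).trans (mul_le_mul_of_nonneg_left hBT hωT)
      nlinarith [e1, e2]
    · have slope1 : T * ω p ≤ p * ω T := hsl T p hT.le hTp
      rcases le_total q T with hqT | hTq
      · -- q ≤ T ≤ p
        have m2 : ω q ≤ ω T := hmono (mem_Ici.mpr hq.le) (mem_Ici.mpr hT.le) hqT
        have hpAT : p * A ≤ T ^ 2 := by nlinarith [mul_nonneg hq.le hBpos.le]
        have e1 : T * (ω p * A) ≤ ω T * (p * A) := by
          calc T * (ω p * A) = (T * ω p) * A := by ring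
            _ ≤ (p * ω T) * A := mul_le_mul_of_nonneg_right slope1 hA0
            _ = ω T * (p * A) := by ring
        have h2 : ω p * A ≤ T * ω T := by
          refine le_of_mul_le_mul_left ?_ hT
          calc T * (ω p * A) ≤ ω T * (p * A) := e1
            _ ≤ ω T * T ^ 2 := mul_le_mul_of_nonneg_left hpAT hωT
            _ = T * (T * ω T) := by ring
        have h3 : ω q * B ≤ T * ω T := by
          calc ω q * B ≤ ω T * B := mul_le_mul_of_nonneg_right m2 hBpos.le
            _ ≤ ω T * T := mul_le_mul_of_nonneg_left hBT hωT
            _ = T * ω T := by ring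
        linarith
      · -- T ≤ q ≤ p
        have slope2 : T * ω q ≤ q * ω T := hsl T q hT.le hTq
        have e1 : T * (ω p * A) ≤ ω T * (p * A) := by
          calc T * (ω p * A) = (T * ω p) * A := by ring
            _ ≤ (p * ω T) * A := mul_le_mul_of_nonneg_right slope1 hA0
            _ = ω T * (p * A) := by ring
        have e2 : T * (ω q * B) ≤ ω T * (q * B) := by
          calc T * (ω q * B) = (T * ω q) * B := by ring
            _ ≤ (q * ω T) * B := mul_le_mul_of_nonneg_right slope2 hBpos.le
            _ = ω T * (q * B) := by ring
        have h1 : ω p * A + ω q * B ≤ T * ω T := by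
          refine le_of_mul_le_mul_left ?_ hT
          calc T * (ω p * A + ω q * B) = T * (ω p * A) + T * (ω q * B) := by ring
            _ ≤ ω T * (p * A) + ω T * (q * B) := add_le_add e1 e2
            _ = ω T * (p * A + q * B) := by ring
            _ = ω T * T ^ 2 := by rw [hsum]
            _ = T * (T * ω T) := by ring
        nlinarith [mul_nonneg hT.le hωT]

private lemma grad_ineq {X : Type*} [NormedAddCommGroup X] [InnerProductSpace ℝ X]
    {ω : ℝ → ℝ} (hnonneg : ∀ t ∈ Ici (0:ℝ), 0 ≤ ω t)
    (hmono : MonotoneOn ω (Ici (0:ℝ))) (h0 : ω 0 = 0)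
    (hsl : ∀ a b : ℝ, 0 ≤ a → a ≤ b → a * ω b ≤ b * ω a)
    (x y : X) :
    ω ‖x‖ * ((inner ℝ x (x - y) : ℝ) / ‖x‖) - ω ‖y‖ * ((inner ℝ y (x - y) : ℝ) / ‖y‖)
      ≤ 2 * (‖x - y‖ * ω ‖x - y‖) := by
  by_cases hxy : x = y
  · simp [hxy, h0]
  have hT : (0:ℝ) < ‖x - y‖ := by
    rw [norm_pos_iff, sub_ne_zero]; exact hxy
  set T : ℝ := ‖x - y‖ with hTdef
  have hωT : 0 ≤ ω T := hnonneg T hT.le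
  by_cases hx0 : x = 0
  · subst hx0
    have hy0 : y ≠ 0 := by simpa [eq_comm] using hxy
    have hyn : (0:ℝ) < ‖y‖ := norm_pos_iff.mpr hy0
    have h1 : (inner ℝ y ((0:X) - y) : ℝ) = -(‖y‖ ^ 2) := by
      rw [zero_sub, inner_neg_right, real_inner_self_eq_norm_sq]
    have h2 : T = ‖y‖ := by rw [hTdef, zero_sub, norm_neg]
    rw [h1, norm_zero, h0, h2]
    have : -(‖y‖ ^ 2) / ‖y‖ = -‖y‖ := by field_simp [hyn.ne']
    rw [this]
    have hωy : 0 ≤ ω ‖y‖ := hnonneg _ hyn.le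
    nlinarith [mul_nonneg hωy hyn.le]
  by_cases hy0 : y = 0
  · subst hy0
    have hxn : (0:ℝ) < ‖x‖ := norm_pos_iff.mpr hx0
    have h1 : (inner ℝ x (x - (0:X)) : ℝ) = ‖x‖ ^ 2 := by
      rw [sub_zero, real_inner_self_eq_norm_sq]
    have h2 : T = ‖x‖ := by rw [hTdef, sub_zero]
    rw [h1, norm_zero, h0, h2]
    have : ‖x‖ ^ 2 / ‖x‖ = ‖x‖ := by rw [sq, mul_div_assoc, div_self hxn.ne', mul_one]
    rw [this]
    have hωx : 0 ≤ ω ‖x‖ := hnonneg _ hxn.le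
    nlinarith [mul_nonneg hωx hxn.le]
  -- main case
  have hp : (0:ℝ) < ‖x‖ := norm_pos_iff.mpr hx0
  have hq : (0:ℝ) < ‖y‖ := norm_pos_iff.mpr hy0
  set p : ℝ := ‖x‖ with hpdef
  set q : ℝ := ‖y‖ with hqdef
  set e : ℝ := (inner ℝ x y : ℝ) with hedef
  have hixv : (inner ℝ x (x - y) : ℝ) = p ^ 2 - e := by
    rw [inner_sub_right, real_inner_self_eq_norm_sq]
  have hiyv : (inner ℝ y (x - y) : ℝ) = e - q ^ 2 := by
    rw [inner_sub_right, real_inner_self_eq_norm_sq, real_inner_comm]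
  have hT2 : T ^ 2 = p ^ 2 + q ^ 2 - 2 * e := by
    rw [hTdef, norm_sub_sq_real]; ring
  have habs : |e| ≤ p * q := abs_real_inner_le_norm x y
  have he1 : e ≤ p * q := (le_abs_self e).trans habs
  have hA' : p ^ 2 - e ≤ p * T := by
    rw [← hixv]; exact real_inner_le_norm x (x - y)
  have hB2 : e - q ^ 2 ≤ q * T := by
    rw [← hiyv]; exact real_inner_le_norm y (x - y)
  have hB1 : q ^ 2 - e ≤ q * T := by
    have heq : (inner ℝ y (y - x) : ℝ) = q ^ 2 - e := by
      rw [inner_sub_right, real_inner_self_eq_norm_sq, real_inner_comm]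
    have h2 := real_inner_le_norm y (y - x)
    rw [heq, norm_sub_rev] at h2
    exact h2
  have hA2 : e - p ^ 2 ≤ p * T := by
    have heq : (inner ℝ x (y - x) : ℝ) = e - p ^ 2 := by
      rw [inner_sub_right, real_inner_self_eq_norm_sq]
    have h2 := real_inner_le_norm x (y - x)
    rw [heq, norm_sub_rev] at h2
    exact h2
  rw [hixv, hiyv]
  have goal_eq : ω p * ((p ^ 2 - e) / p) - ω q * ((e - q ^ 2) / q)
      = ω p * ((p ^ 2 - e) / p) + ω q * ((q ^ 2 - e) / q) := by ring
  rw [goal_eq]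
  rcases le_total q p with hqp | hpq
  · exact core_ineq hnonneg hmono hsl hp hq hT hqp he1 hA' hB1 hB2 hT2
  · have hcore := core_ineq hnonneg hmono hsl hq hp hT hpq
      (by rw [mul_comm]; exact he1) hB1 hA' hA2 (by rw [hT2]; ring)
    linarith

private lemma norm_curve_deriv {X : Type*} [NormedAddCommGroup X] [InnerProductSpace ℝ X]
    (z h : X) (s : ℝ) (hs : z + s • h ≠ 0) :
    HasDerivAt (fun s' : ℝ => ‖z + s' • h‖)
      ((inner ℝ (z + s • h) h : ℝ) / ‖z + s • h‖) s := by
  have hcurve : ∀ u : ℝ, HasDerivAt (fun s' : ℝ => z + s' • h) h u := by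
    intro u
    simpa using ((hasDerivAt_id u).smul_const h).const_add z
  have hinner : HasDerivAt (fun s' : ℝ => (inner ℝ (z + s' • h) (z + s' • h) : ℝ))
      ((inner ℝ (z + s • h) h : ℝ) + (inner ℝ h (z + s • h) : ℝ)) s :=
    (hcurve s).inner ℝ (hcurve s)
  have hne : (inner ℝ (z + s • h) (z + s • h) : ℝ) ≠ 0 := by
    rw [real_inner_self_eq_norm_sq]
    have : (0:ℝ) < ‖z + s • h‖ := norm_pos_iff.mpr hs
    positivity
  have hsqrt := hinner.sqrt hne
  have heq : (fun s' : ℝ => ‖z + s' • h‖)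
      = fun s' : ℝ => Real.sqrt (inner ℝ (z + s' • h) (z + s' • h) : ℝ) := by
    funext s'
    rw [← norm_eq_sqrt_real_inner]
  rw [← heq] at hsqrt
  convert hsqrt using 1
  rw [real_inner_comm h (z + s • h), ← norm_eq_sqrt_real_inner]
  have hpos : (0:ℝ) < ‖z + s • h‖ := norm_pos_iff.mpr hs
  field_simp
  ring

private lemma qderiv_bad {X : Type*} [NormedAddCommGroup X] [InnerProductSpace ℝ X]
    (ω : ℝ → ℝ)
    (tend0 : Tendsto ω (nhdsWithin 0 (Ici (0:ℝ))) (nhds 0))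
    (hphinn : ∀ b : ℝ, 0 ≤ b → 0 ≤ ∫ s in (0:ℝ)..b, ω s)
    (hphile : ∀ b : ℝ, 0 ≤ b → (∫ s in (0:ℝ)..b, ω s) ≤ b * ω b)
    (z h : X) (hh : h ≠ 0) (s : ℝ) (hs : z + s • h = 0) :
    HasDerivAt (fun s' : ℝ => ∫ u in (0:ℝ)..(‖z + s' • h‖), ω u) 0 s := by
  have hht : (0:ℝ) < ‖h‖ := norm_pos_iff.mpr hh
  have hz : z = -(s • h) := eq_neg_of_add_eq_zero_left hs
  have hpt : ∀ s' : ℝ, z + s' • h = (s' - s) • h := by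
    intro s'
    rw [hz, sub_smul]
    abel
  rw [hasDerivAt_iff_isLittleO, Asymptotics.isLittleO_iff]
  intro c hc
  have hc' : (0:ℝ) < c / ‖h‖ := by positivity
  have hev : ω ⁻¹' (Iio (c / ‖h‖)) ∈ nhdsWithin 0 (Ici (0:ℝ)) := tend0 (Iio_mem_nhds hc')
  rw [Metric.mem_nhdsWithin_iff] at hev
  obtain ⟨ε, hε, hball⟩ := hev
  rw [Metric.eventually_nhds_iff]
  refine ⟨ε / ‖h‖, by positivity, ?_⟩
  intro s' hs'
  have hdist : |s' - s| < ε / ‖h‖ := by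
    rw [Real.dist_eq] at hs'
    exact hs'
  have hr : ‖z + s' • h‖ = |s' - s| * ‖h‖ := by
    rw [hpt s', norm_smul, Real.norm_eq_abs]
  have hrlt : ‖z + s' • h‖ < ε := by
    rw [hr]
    calc |s' - s| * ‖h‖ < (ε / ‖h‖) * ‖h‖ := mul_lt_mul_of_pos_right hdist hht
      _ = ε := by field_simp
  have hrnn : (0:ℝ) ≤ ‖z + s' • h‖ := norm_nonneg _
  have hωr : ω ‖z + s' • h‖ ≤ c / ‖h‖ := by
    have hmem : ‖z + s' • h‖ ∈ Metric.ball (0:ℝ) ε ∩ Ici 0 := by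
      constructor
      · rw [Metric.mem_ball, Real.dist_eq, sub_zero, abs_of_nonneg hrnn]
        exact hrlt
      · exact hrnn
    exact le_of_lt (hball hmem)
  have hQ0 : (∫ u in (0:ℝ)..(‖z + s • h‖), ω u) = 0 := by
    rw [hs]
    simp
  have hb1 : (∫ u in (0:ℝ)..(‖z + s' • h‖), ω u) ≤ c * ‖s' - s‖ := by
    calc (∫ u in (0:ℝ)..(‖z + s' • h‖), ω u) ≤ ‖z + s' • h‖ * ω ‖z + s' • h‖ :=
          hphile _ hrnn
      _ ≤ ‖z + s' • h‖ * (c / ‖h‖) := mul_le_mul_of_nonneg_left hωr hrnn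
      _ = |s' - s| * ‖h‖ * (c / ‖h‖) := by rw [hr]
      _ = c * |s' - s| := by field_simp
      _ = c * ‖s' - s‖ := by rw [Real.norm_eq_abs]
  have hb0 : 0 ≤ (∫ u in (0:ℝ)..(‖z + s' • h‖), ω u) := hphinn _ hrnn
  rw [hQ0]
  simp only [smul_zero, sub_zero]
  rw [Real.norm_eq_abs (∫ u in (0:ℝ)..(‖z + s' • h‖), ω u), abs_of_nonneg hb0]
  exact hb1

private lemma G_cont {X : Type*} [NormedAddCommGroup X] [InnerProductSpace ℝ X]
    (ω : ℝ → ℝ)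
    (hnonneg : ∀ t ∈ Ici (0:ℝ), 0 ≤ ω t)
    (h0 : ω 0 = 0)
    (hcont : ContinuousOn ω (Ioi (0:ℝ)))
    (tend0 : Tendsto ω (nhdsWithin 0 (Ici (0:ℝ))) (nhds 0))
    (z h : X) :
    Continuous (fun s : ℝ => ω ‖z + s • h‖ * ((inner ℝ (z + s • h) h : ℝ) / ‖z + s • h‖)) := by
  have hN : Continuous (fun s : ℝ => ‖z + s • h‖) :=
    (continuous_const.add (continuous_id.smul continuous_const)).norm
  have hI : Continuous (fun s : ℝ => (inner ℝ (z + s • h) h : ℝ)) :=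
    (continuous_const.add (continuous_id.smul continuous_const)).inner continuous_const
  rw [continuous_iff_continuousAt]
  intro s
  by_cases hs : z + s • h = 0
  · -- squeeze
    have hval : ω ‖z + s • h‖ * ((inner ℝ (z + s • h) h : ℝ) / ‖z + s • h‖) = 0 := by
      rw [hs]
      simp [h0]
    have hval' : (fun s' : ℝ => ω ‖z + s' • h‖ * ((inner ℝ (z + s' • h) h : ℝ) / ‖z + s' • h‖)) s
        = 0 := hval
    unfold ContinuousAt
    rw [hval']
    apply squeeze_zero_norm (a := fun s' : ℝ => ω ‖z + s' • h‖ * ‖h‖)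
    · intro s'
      rcases eq_or_ne (z + s' • h) 0 with h' | h'
      · rw [h']
        simp [h0]
      · have hpos : (0:ℝ) < ‖z + s' • h‖ := norm_pos_iff.mpr h'
        have hω : 0 ≤ ω ‖z + s' • h‖ := hnonneg _ hpos.le
        rw [Real.norm_eq_abs, abs_mul, abs_of_nonneg hω, abs_div, abs_of_nonneg hpos.le]
        apply mul_le_mul_of_nonneg_left _ hω
        rw [div_le_iff₀ hpos]
        calc |(inner ℝ (z + s' • h) h : ℝ)| ≤ ‖z + s' • h‖ * ‖h‖ := abs_real_inner_le_norm _ _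
          _ = ‖h‖ * ‖z + s' • h‖ := by ring
    · have h1 : Tendsto (fun s' : ℝ => ‖z + s' • h‖) (nhds s) (nhdsWithin 0 (Ici 0)) := by
        apply tendsto_nhdsWithin_of_tendsto_nhds_of_eventually_within
        · have := hN.continuousAt (x := s)
          rwa [ContinuousAt, hs, norm_zero] at this
        · exact Eventually.of_forall (fun s' => norm_nonneg _)
      have h2 : Tendsto (fun s' : ℝ => ω ‖z + s' • h‖ * ‖h‖) (nhds s) (nhds (0 * ‖h‖)) :=
        (tend0.comp h1).mul_const ‖h‖
      rwa [zero_mul] at h2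
  · have hpos : (0:ℝ) < ‖z + s • h‖ := norm_pos_iff.mpr hs
    have hc1 : ContinuousAt ω ‖z + s • h‖ := hcont.continuousAt (isOpen_Ioi.mem_nhds hpos)
    have hA : ContinuousAt (fun s' : ℝ => ω ‖z + s' • h‖) s :=
      ContinuousAt.comp (g := ω) (f := fun s' : ℝ => ‖z + s' • h‖) hc1 hN.continuousAt
    have hB : ContinuousAt (fun s' : ℝ => (inner ℝ (z + s' • h) h : ℝ) / ‖z + s' • h‖) s :=
      hI.continuousAt.div hN.continuousAt hpos.ne'
    exact hA.mul hB

private lemma pointwise_bound {X : Type*} [NormedAddCommGroup X] [InnerProductSpace ℝ X]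
    {ω : ℝ → ℝ} (hnonneg : ∀ t ∈ Ici (0:ℝ), 0 ≤ ω t)
    (hmono : MonotoneOn ω (Ici (0:ℝ))) (h0 : ω 0 = 0)
    (hsl : ∀ a b : ℝ, 0 ≤ a → a ≤ b → a * ω b ≤ b * ω a)
    (z h : X) (a b u : ℝ) (hu : 0 < u) (hab : a - b = u) :
    ω ‖z + a • h‖ * ((inner ℝ (z + a • h) h : ℝ) / ‖z + a • h‖)
      - ω ‖z + b • h‖ * ((inner ℝ (z + b • h) h : ℝ) / ‖z + b • h‖)
      ≤ 2 * ‖h‖ * ω (‖h‖ * u) := by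
  set x : X := z + a • h with hxdef
  set y : X := z + b • h with hydef
  have hxy : x - y = u • h := by
    rw [hxdef, hydef, add_sub_add_left_eq_sub, ← sub_smul, hab]
  have hT : ‖x - y‖ = ‖h‖ * u := by
    rw [hxy, norm_smul, Real.norm_eq_abs, abs_of_pos hu]
    ring
  have e1 : (inner ℝ x (x - y) : ℝ) = u * (inner ℝ x h : ℝ) := by
    rw [hxy, real_inner_smul_right]
  have e2 : (inner ℝ y (x - y) : ℝ) = u * (inner ℝ y h : ℝ) := by
    rw [hxy, real_inner_smul_right]
  have key := grad_ineq hnonneg hmono h0 hsl x y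
  rw [e1, e2, hT] at key
  have key2 : u * (ω ‖x‖ * ((inner ℝ x h : ℝ) / ‖x‖) - ω ‖y‖ * ((inner ℝ y h : ℝ) / ‖y‖))
      ≤ u * (2 * ‖h‖ * ω (‖h‖ * u)) := by
    calc u * (ω ‖x‖ * ((inner ℝ x h : ℝ) / ‖x‖) - ω ‖y‖ * ((inner ℝ y h : ℝ) / ‖y‖))
        = ω ‖x‖ * (u * (inner ℝ x h : ℝ) / ‖x‖) - ω ‖y‖ * (u * (inner ℝ y h : ℝ) / ‖y‖) := by
          ring
      _ ≤ 2 * (‖h‖ * u * ω (‖h‖ * u)) := key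
      _ = u * (2 * ‖h‖ * ω (‖h‖ * u)) := by ring
  exact le_of_mul_le_mul_left key2 hu

theorem stmt_16 {X : Type*} [NormedAddCommGroup X] [InnerProductSpace ℝ X]
    (ω φ : ℝ → ℝ)
    (hnonneg : ∀ t ∈ Ici (0:ℝ), 0 ≤ ω t)
    (hmono : StrictMonoOn ω (Ici (0:ℝ)))
    (hconc : ConcaveOn ℝ (Ici (0:ℝ)) ω)
    (h0 : ω 0 = 0)
    (h0' : Filter.Tendsto ω (nhdsWithin 0 (Ioi (0:ℝ))) (nhds 0))
    (hcoer : Filter.Tendsto ω Filter.atTop Filter.atTop)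
    (hφ : ∀ t, φ t = ∫ s in (0:ℝ)..t, ω s) :
    ∀ (z h : X), ∀ l ∈ Icc (0:ℝ) 1,
      l * φ ‖z + (1 - l) • h‖ + (1 - l) * φ ‖z - l • h‖ - φ ‖z‖
        ≤ 2 * (l * (1 - l)) * φ ‖h‖ := by
  intro z h l hl
  simp only [hφ]
  -- basic facts about ω
  have hmono' : MonotoneOn ω (Ici (0:ℝ)) := hmono.monotoneOn
  have hsl : ∀ a b : ℝ, 0 ≤ a → a ≤ b → a * ω b ≤ b * ω a :=
    fun a b ha hab => slope_lemma hconc h0 ha hab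
  have hcont : ContinuousOn ω (Ioi (0:ℝ)) := by
    have := hconc.continuousOn_interior
    rwa [interior_Ici] at this
  have tend0 : Tendsto ω (nhdsWithin 0 (Ici (0:ℝ))) (nhds 0) := by
    have h1 : Ici (0:ℝ) = insert 0 (Ioi 0) := by rw [Ioi_insert]
    rw [h1, nhdsWithin_insert, tendsto_sup]
    exact ⟨by simpa [h0] using tendsto_pure_nhds ω 0, h0'⟩
  have hInt : ∀ b : ℝ, 0 ≤ b → IntervalIntegrable ω volume 0 b := by
    intro b hb
    refine (hmono'.mono ?_).intervalIntegrable
    rw [uIcc_of_le hb]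
    exact Icc_subset_Ici_self
  have hphiD : ∀ b : ℝ, 0 < b → HasDerivAt (fun t => ∫ s in (0:ℝ)..t, ω s) (ω b) b :=
    fun b hb => intervalIntegral.integral_hasDerivAt_right (hInt b hb.le)
      (ContinuousOn.stronglyMeasurableAtFilter isOpen_Ioi hcont b hb)
      (hcont.continuousAt (isOpen_Ioi.mem_nhds hb))
  have hphinn : ∀ b : ℝ, 0 ≤ b → 0 ≤ ∫ s in (0:ℝ)..b, ω s :=
    fun b hb => intervalIntegral.integral_nonneg hb (fun u hu => hnonneg u hu.1)
  have hphile : ∀ b : ℝ, 0 ≤ b → (∫ s in (0:ℝ)..b, ω s) ≤ b * ω b := by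
    intro b hb
    have h1 : (∫ s in (0:ℝ)..b, ω s) ≤ ∫ _s in (0:ℝ)..b, ω b :=
      intervalIntegral.integral_mono_on hb (hInt b hb) intervalIntegrable_const
        (fun u hu => hmono' (mem_Ici.mpr hu.1) (mem_Ici.mpr hb) hu.2)
    simpa using h1
  -- trivial case h = 0
  by_cases hh : h = 0
  · subst hh
    simp only [smul_zero, add_zero, sub_zero, norm_zero]
    have hz0 : (∫ s in (0:ℝ)..(0:ℝ), ω s) = 0 := by simp
    rw [hz0]
    have : l * (∫ s in (0:ℝ)..‖z‖, ω s) + (1 - l) * (∫ s in (0:ℝ)..‖z‖, ω s)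
        - (∫ s in (0:ℝ)..‖z‖, ω s) = 0 := by ring
    rw [this]
    simp
  -- main case
  have hht : (0:ℝ) < ‖h‖ := norm_pos_iff.mpr hh
  have hzsub : z - l • h = z + (-l) • h := by
    rw [neg_smul, ← sub_eq_add_neg]
  rw [hzsub]
  set G : ℝ → ℝ := fun s => ω ‖z + s • h‖ * ((inner ℝ (z + s • h) h : ℝ) / ‖z + s • h‖)
    with hGdef
  have hGc : Continuous G := G_cont ω hnonneg h0 hcont tend0 z h
  have hQD : ∀ s : ℝ, HasDerivAt (fun s' : ℝ => ∫ u in (0:ℝ)..(‖z + s' • h‖), ω u) (G s) s := by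
    intro s
    by_cases hs : z + s • h = 0
    · have hG0 : G s = 0 := by
        rw [hGdef]
        simp only
        rw [hs]
        simp [h0]
      rw [hG0]
      exact qderiv_bad ω tend0 hphinn hphile z h hh s hs
    · have hr : (0:ℝ) < ‖z + s • h‖ := norm_pos_iff.mpr hs
      have hcomp := (hphiD _ hr).comp s (norm_curve_deriv z h s hs)
      exact hcomp
  have ftc : ∀ s : ℝ, (∫ u in (0:ℝ)..s, G u)
      = (∫ u in (0:ℝ)..(‖z + s • h‖), ω u) - (∫ u in (0:ℝ)..‖z‖, ω u) := by
    intro s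
    have := intervalIntegral.integral_eq_sub_of_hasDerivAt
      (f := fun s' : ℝ => ∫ u in (0:ℝ)..(‖z + s' • h‖), ω u) (f' := G)
      (a := 0) (b := s) (fun x _ => hQD x) (hGc.intervalIntegrable 0 s)
    simpa using this
  have hint1 : IntervalIntegrable (fun u : ℝ => G ((1 - l) * u)) volume 0 1 :=
    (hGc.comp (continuous_const.mul continuous_id)).intervalIntegrable 0 1
  have hint2 : IntervalIntegrable (fun u : ℝ => G ((-l) * u)) volume 0 1 :=
    (hGc.comp (continuous_const.mul continuous_id)).intervalIntegrable 0 1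
  have sub1 : (∫ u in (0:ℝ)..(‖z + (1 - l) • h‖), ω u) - (∫ u in (0:ℝ)..‖z‖, ω u)
      = (1 - l) * ∫ u in (0:ℝ)..1, G ((1 - l) * u) := by
    rw [← ftc (1 - l)]
    have hc := intervalIntegral.smul_integral_comp_mul_left (a := (0:ℝ)) (b := 1)
      (fun u => G u) (1 - l)
    simp only [mul_zero, mul_one, smul_eq_mul] at hc
    exact hc.symm
  have sub2 : (∫ u in (0:ℝ)..(‖z + (-l) • h‖), ω u) - (∫ u in (0:ℝ)..‖z‖, ω u)
      = (-l) * ∫ u in (0:ℝ)..1, G ((-l) * u) := by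
    rw [← ftc (-l)]
    have hc := intervalIntegral.smul_integral_comp_mul_left (a := (0:ℝ)) (b := 1)
      (fun u => G u) (-l)
    simp only [mul_zero, mul_one, smul_eq_mul] at hc
    exact hc.symm
  have comb : l * (∫ u in (0:ℝ)..(‖z + (1 - l) • h‖), ω u)
        + (1 - l) * (∫ u in (0:ℝ)..(‖z + (-l) • h‖), ω u)
        - (∫ u in (0:ℝ)..‖z‖, ω u)
      = (l * (1 - l)) * ∫ u in (0:ℝ)..1, (G ((1 - l) * u) - G ((-l) * u)) := by
    have lhs_eq : l * (∫ u in (0:ℝ)..(‖z + (1 - l) • h‖), ω u)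
        + (1 - l) * (∫ u in (0:ℝ)..(‖z + (-l) • h‖), ω u)
        - (∫ u in (0:ℝ)..‖z‖, ω u)
        = l * ((∫ u in (0:ℝ)..(‖z + (1 - l) • h‖), ω u) - (∫ u in (0:ℝ)..‖z‖, ω u))
          + (1 - l) * ((∫ u in (0:ℝ)..(‖z + (-l) • h‖), ω u) - (∫ u in (0:ℝ)..‖z‖, ω u)) := by
      ring
    rw [lhs_eq, sub1, sub2, intervalIntegral.integral_sub hint1 hint2]
    ring
  rw [comb]
  have hWint : IntervalIntegrable (fun u : ℝ => 2 * ‖h‖ * ω (‖h‖ * u)) volume 0 1 := by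
    apply IntervalIntegrable.const_mul
    refine MonotoneOn.intervalIntegrable ?_
    intro a ha b hb hab
    rw [uIcc_of_le zero_le_one] at ha hb
    exact hmono' (mem_Ici.mpr (mul_nonneg hht.le ha.1)) (mem_Ici.mpr (mul_nonneg hht.le hb.1))
      (mul_le_mul_of_nonneg_left hab hht.le)
  have hpoint : ∀ u ∈ Icc (0:ℝ) 1, G ((1 - l) * u) - G ((-l) * u) ≤ 2 * ‖h‖ * ω (‖h‖ * u) := by
    intro u hu
    rcases hu.1.eq_or_lt with heq | hu0
    · subst heq
      simp only [mul_zero]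
      have : G 0 - G 0 = 0 := by ring
      rw [this, h0, mul_zero]
    · simp only [hGdef]
      exact pointwise_bound hnonneg hmono' h0 hsl z h ((1 - l) * u) ((-l) * u) u hu0 (by ring)
  have hmono_int : (∫ u in (0:ℝ)..1, (G ((1 - l) * u) - G ((-l) * u)))
      ≤ ∫ u in (0:ℝ)..1, 2 * ‖h‖ * ω (‖h‖ * u) :=
    intervalIntegral.integral_mono_on zero_le_one (hint1.sub hint2) hWint hpoint
  have hWval : (∫ u in (0:ℝ)..1, 2 * ‖h‖ * ω (‖h‖ * u)) = 2 * ∫ s in (0:ℝ)..‖h‖, ω s := by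
    rw [intervalIntegral.integral_const_mul]
    have hc := intervalIntegral.smul_integral_comp_mul_left (a := (0:ℝ)) (b := 1) ω ‖h‖
    simp only [mul_zero, mul_one, smul_eq_mul] at hc
    rw [mul_assoc, hc]
  have hμ : 0 ≤ l * (1 - l) := mul_nonneg hl.1 (by linarith [hl.2])
  calc (l * (1 - l)) * ∫ u in (0:ℝ)..1, (G ((1 - l) * u) - G ((-l) * u))
      ≤ (l * (1 - l)) * ∫ u in (0:ℝ)..1, 2 * ‖h‖ * ω (‖h‖ * u) :=
        mul_le_mul_of_nonneg_left hmono_int hμ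
    _ = 2 * (l * (1 - l)) * ∫ s in (0:ℝ)..‖h‖, ω s := by rw [hWval]; ring
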